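/- The image set AV = { Au : u ∈ V } is relatively compact in the Banach space C[ε,Λ] of continuous real-valued functions on [ε,Λ] with the supremum norm; equivalently, AV is uniformly bounded and equicontinuous, so its closure in C[ε,Λ] is compact. -/

import Mathlib

open Real Set MeasureTheory intervalIntegral

/-- The function `w(x) = (4ε/λ)·√(ε/(Λx))`. -/
noncomputable def wfun (lam ε Λ : ℝ) (x : ℝ) : ℝ :=
  (4 * ε / lam) * Real.sqrt (ε / (Λ * x))

/-- The nonlinear integral operator `A`. -/
noncomputable def opA (lam ε Λ : ℝ) (u : ℝ → ℝ) (x : ℝ) : ℝ :=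
  (lam / 2) * ∫ y in ε..Λ, (1 / (y + x + |y - x|)) * (y * u y / (y + (u y) ^ 2))

/-- Membership in the set `V`: continuous on `[ε,Λ]` and `w(x) ≤ u(x) ≤ (λ/4)√Λ` there. -/
def memV (lam ε Λ : ℝ) (u : ℝ → ℝ) : Prop :=
  ContinuousOn u (Set.Icc ε Λ) ∧
    ∀ x ∈ Set.Icc ε Λ, wfun lam ε Λ x ≤ u x ∧ u x ≤ (lam / 4) * Real.sqrt Λ

section aux

variable {ε Λ lam : ℝ}

lemma g_bound (hε : 0 < ε) (hlam : 0 < lam) {u : ℝ → ℝ} (hu : memV lam ε Λ u)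
    {y : ℝ} (hy : y ∈ Set.Icc ε Λ) :
    |y * u y / (y + (u y) ^ 2)| ≤ lam / 4 * Real.sqrt Λ := by
  have hy0 : 0 < y := lt_of_lt_of_le hε hy.1
  have hw : 0 ≤ wfun lam ε Λ y := by
    unfold wfun
    positivity
  have hu0 : 0 ≤ u y := le_trans hw (hu.2 y hy).1
  have hden : 0 < y + (u y) ^ 2 := by positivity
  rw [abs_of_nonneg (by positivity)]
  have h1 : y * u y / (y + (u y) ^ 2) ≤ u y := by
    rw [div_le_iff₀ hden]
    nlinarith [sq_nonneg (u y)]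
  have h2 := (hu.2 y hy).2
  calc y * u y / (y + (u y) ^ 2) ≤ u y := h1
    _ ≤ lam / 4 * Real.sqrt Λ := by linarith

lemma g_contOn (hε : 0 < ε) {u : ℝ → ℝ} (hu : memV lam ε Λ u) :
    ContinuousOn (fun y => y * u y / (y + (u y) ^ 2)) (Set.Icc ε Λ) := by
  apply ContinuousOn.div (continuousOn_id.mul hu.1)
    (continuousOn_id.add (hu.1.pow 2))
  intro y hy
  have hy0 : 0 < y := lt_of_lt_of_le hε hy.1
  show y + u y ^ 2 ≠ 0
  positivity

lemma D_ge (hε : 0 < ε) {x y : ℝ} (hx : x ∈ Set.Icc ε Λ) (hy : y ∈ Set.Icc ε Λ) :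
    2 * ε ≤ y + x + |y - x| := by
  have := abs_nonneg (y - x)
  have := hx.1; have := hy.1
  linarith

lemma intg (hε : 0 < ε) (hεΛ : ε < Λ) {u : ℝ → ℝ} (hu : memV lam ε Λ u)
    {x : ℝ} (hx : x ∈ Set.Icc ε Λ) :
    IntervalIntegrable (fun y => (1 / (y + x + |y - x|)) * (y * u y / (y + (u y) ^ 2)))
      volume ε Λ := by
  apply ContinuousOn.intervalIntegrable
  rw [Set.uIcc_of_le hεΛ.le]
  apply ContinuousOn.mul _ (g_contOn hε hu)
  apply ContinuousOn.div continuousOn_const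
  · fun_prop
  · intro y hy
    exact ne_of_gt (lt_of_lt_of_le (by linarith : (0:ℝ) < 2 * ε) (D_ge hε hx hy))

lemma opA_abs_bound (hε : 0 < ε) (hεΛ : ε < Λ) (hlam : 0 < lam) {u : ℝ → ℝ}
    (hu : memV lam ε Λ u) {x : ℝ} (hx : x ∈ Set.Icc ε Λ) :
    |opA lam ε Λ u x| ≤ lam / 2 * (lam / 4 * Real.sqrt Λ / (2 * ε) * (Λ - ε)) := by
  unfold opA
  rw [abs_mul, abs_of_nonneg (by positivity : (0:ℝ) ≤ lam / 2)]
  have key : |∫ y in ε..Λ, (1 / (y + x + |y - x|)) * (y * u y / (y + (u y) ^ 2))| ≤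
      lam / 4 * Real.sqrt Λ / (2 * ε) * |Λ - ε| := by
    rw [← Real.norm_eq_abs (∫ y in ε..Λ, (1 / (y + x + |y - x|)) * (y * u y / (y + (u y) ^ 2)))]
    apply intervalIntegral.norm_integral_le_of_norm_le_const
    intro y hy
    rw [Set.uIoc_of_le hεΛ.le] at hy
    have hy' : y ∈ Set.Icc ε Λ := ⟨hy.1.le, hy.2⟩
    have hD := D_ge hε hx hy'
    have hD0 : 0 < y + x + |y - x| := lt_of_lt_of_le (by positivity) hD
    rw [Real.norm_eq_abs, abs_mul]
    have h1 : |1 / (y + x + |y - x|)| ≤ 1 / (2 * ε) := by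
      rw [abs_of_nonneg (by positivity)]
      exact one_div_le_one_div_of_le (by positivity) hD
    have h2 := g_bound hε hlam hu hy'
    calc |1 / (y + x + |y - x|)| * |y * u y / (y + (u y) ^ 2)|
        ≤ (1 / (2 * ε)) * (lam / 4 * Real.sqrt Λ) :=
          mul_le_mul h1 h2 (abs_nonneg _) (by positivity)
      _ = lam / 4 * Real.sqrt Λ / (2 * ε) := by ring
  calc lam / 2 * |∫ y in ε..Λ, (1 / (y + x + |y - x|)) * (y * u y / (y + (u y) ^ 2))|
      ≤ lam / 2 * (lam / 4 * Real.sqrt Λ / (2 * ε) * |Λ - ε|) := by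
        apply mul_le_mul_of_nonneg_left key (by positivity)
    _ = lam / 2 * (lam / 4 * Real.sqrt Λ / (2 * ε) * (Λ - ε)) := by
        rw [abs_of_nonneg (by linarith)]

lemma opA_lip (hε : 0 < ε) (hεΛ : ε < Λ) (hlam : 0 < lam) {u : ℝ → ℝ}
    (hu : memV lam ε Λ u) {x x' : ℝ} (hx : x ∈ Set.Icc ε Λ) (hx' : x' ∈ Set.Icc ε Λ) :
    |opA lam ε Λ u x - opA lam ε Λ u x'| ≤
      lam / 2 * (lam / 4 * Real.sqrt Λ / (2 * ε ^ 2) * (Λ - ε)) * |x - x'| := by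
  set g : ℝ → ℝ := fun y => y * u y / (y + (u y) ^ 2) with hg
  have e1 : opA lam ε Λ u x - opA lam ε Λ u x' =
      lam / 2 * ∫ y in ε..Λ,
        (1 / (y + x + |y - x|) - 1 / (y + x' + |y - x'|)) * g y := by
    unfold opA
    rw [← mul_sub, ← intervalIntegral.integral_sub (intg hε hεΛ hu hx) (intg hε hεΛ hu hx')]
    congr 1
    apply intervalIntegral.integral_congr
    intro y _
    ring
  rw [e1, abs_mul, abs_of_nonneg (by positivity : (0:ℝ) ≤ lam / 2)]
  have key : |∫ y in ε..Λ, (1 / (y + x + |y - x|) - 1 / (y + x' + |y - x'|)) * g y| ≤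
      (|x - x'| / (2 * ε ^ 2) * (lam / 4 * Real.sqrt Λ)) * |Λ - ε| := by
    rw [← Real.norm_eq_abs (∫ y in ε..Λ, (1 / (y + x + |y - x|) - 1 / (y + x' + |y - x'|)) * g y)]
    apply intervalIntegral.norm_integral_le_of_norm_le_const
    intro y hy
    rw [Set.uIoc_of_le hεΛ.le] at hy
    have hy' : y ∈ Set.Icc ε Λ := ⟨hy.1.le, hy.2⟩
    have hD := D_ge hε hx hy'
    have hD' := D_ge hε hx' hy'
    have hD0 : 0 < y + x + |y - x| := lt_of_lt_of_le (by positivity) hD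
    have hD0' : 0 < y + x' + |y - x'| := lt_of_lt_of_le (by positivity) hD'
    rw [Real.norm_eq_abs, abs_mul]
    have hker : |1 / (y + x + |y - x|) - 1 / (y + x' + |y - x'|)| ≤ |x - x'| / (2 * ε ^ 2) := by
      rw [div_sub_div _ _ hD0.ne' hD0'.ne', abs_div]
      have hnum : |1 * (y + x' + |y - x'|) - (y + x + |y - x|) * 1| ≤ 2 * |x - x'| := by
        have h1 : |(|y - x'| - |y - x|)| ≤ |x - x'| := by
          calc |(|y - x'| - |y - x|)| ≤ |(y - x') - (y - x)| := abs_abs_sub_abs_le_abs_sub _ _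
            _ = |x - x'| := by rw [show (y - x') - (y - x) = -(x' - x) by ring, abs_neg,
                abs_sub_comm]
        calc |1 * (y + x' + |y - x'|) - (y + x + |y - x|) * 1|
            = |(x' - x) + (|y - x'| - |y - x|)| := by
              apply congr_arg abs; ring
          _ ≤ |x' - x| + |(|y - x'| - |y - x|)| := abs_add_le _ _
          _ ≤ |x - x'| + |x - x'| := by
              rw [abs_sub_comm]; exact add_le_add le_rfl h1
          _ = 2 * |x - x'| := by ring
      have hden : (2 * ε) * (2 * ε) ≤ (y + x + |y - x|) * (y + x' + |y - x'|) :=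
        mul_le_mul hD hD' (by positivity) (le_of_lt hD0)
      rw [abs_of_nonneg (by positivity : (0:ℝ) ≤ (y + x + |y - x|) * (y + x' + |y - x'|))]
      calc |1 * (y + x' + |y - x'|) - (y + x + |y - x|) * 1| /
            ((y + x + |y - x|) * (y + x' + |y - x'|))
          ≤ (2 * |x - x'|) / ((2 * ε) * (2 * ε)) :=
            div_le_div₀ (by positivity) hnum (by positivity) hden
        _ = |x - x'| / (2 * ε ^ 2) := by ring
    have h2 := g_bound hε hlam hu hy'
    exact mul_le_mul hker h2 (abs_nonneg _) (by positivity)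
  calc lam / 2 * |∫ y in ε..Λ, (1 / (y + x + |y - x|) - 1 / (y + x' + |y - x'|)) * g y|
      ≤ lam / 2 * ((|x - x'| / (2 * ε ^ 2) * (lam / 4 * Real.sqrt Λ)) * |Λ - ε|) :=
        mul_le_mul_of_nonneg_left key (by positivity)
    _ = lam / 2 * (lam / 4 * Real.sqrt Λ / (2 * ε ^ 2) * |Λ - ε|) * |x - x'| := by ring
    _ = lam / 2 * (lam / 4 * Real.sqrt Λ / (2 * ε ^ 2) * (Λ - ε)) * |x - x'| := by
        rw [abs_of_nonneg (by linarith)]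

end aux

theorem stmt_6 (ε Λ lam : ℝ) (hε : 0 < ε) (hεΛ : ε < Λ) (hlam : 2 < lam)
    (hratio : ε / Λ ≤ min (1 / 16)
      (((Real.sqrt (lam ^ 2 + 128 * (lam - 2)) - lam) / 64) ^ 2)) :
    IsCompact (closure { f : C(Set.Icc ε Λ, ℝ) |
      ∃ u : ℝ → ℝ, memV lam ε Λ u ∧ ∀ x : Set.Icc ε Λ, f x = opA lam ε Λ u x }) := by
  have hlam0 : (0:ℝ) < lam := by linarith
  set C : ℝ := lam / 2 * (lam / 4 * Real.sqrt Λ / (2 * ε) * (Λ - ε)) with hC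
  set L : ℝ := lam / 2 * (lam / 4 * Real.sqrt Λ / (2 * ε ^ 2) * (Λ - ε)) with hL
  set K : Set C(Set.Icc ε Λ, ℝ) :=
    {f | (∀ a b : Set.Icc ε Λ, dist (f a) (f b) ≤ L * dist a b) ∧
      ∀ a : Set.Icc ε Λ, |f a| ≤ C} with hK
  have hSK : { f : C(Set.Icc ε Λ, ℝ) |
      ∃ u : ℝ → ℝ, memV lam ε Λ u ∧ ∀ x : Set.Icc ε Λ, f x = opA lam ε Λ u x } ⊆ K := by
    rintro f ⟨u, hu, hf⟩
    constructor
    · intro a b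
      rw [hf a, hf b, Real.dist_eq, Subtype.dist_eq, Real.dist_eq]
      exact opA_lip hε hεΛ hlam0 hu a.2 b.2
    · intro a
      rw [hf a]
      exact opA_abs_bound hε hεΛ hlam0 hu a.2
  have hKc : IsCompact K := by
    apply ArzelaAscoli.isCompact_of_equicontinuous
    · -- IsCompact (toFun '' K)
      have himg : ContinuousMap.toFun '' K =
          {g : Set.Icc ε Λ → ℝ | (∀ a b : Set.Icc ε Λ, dist (g a) (g b) ≤ L * dist a b) ∧
            ∀ a : Set.Icc ε Λ, |g a| ≤ C} := by
        ext g
        constructor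
        · rintro ⟨f, hfK, rfl⟩
          exact hfK
        · rintro ⟨h1, h2⟩
          have hcont : Continuous g := by
            have : LipschitzWith (Real.toNNReal L) g := by
              apply LipschitzWith.of_dist_le_mul
              intro a b
              calc dist (g a) (g b) ≤ L * dist a b := h1 a b
                _ ≤ (Real.toNNReal L) * dist a b :=
                  mul_le_mul_of_nonneg_right (Real.le_coe_toNNReal L) dist_nonneg
            exact this.continuous
          exact ⟨⟨g, hcont⟩, ⟨h1, h2⟩, rfl⟩
      rw [himg]
      apply IsCompact.of_isClosed_subset
        (isCompact_univ_pi (fun _ => isCompact_Icc (a := -C) (b := C)))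
      · have h1 : IsClosed {g : Set.Icc ε Λ → ℝ |
            ∀ a b : Set.Icc ε Λ, dist (g a) (g b) ≤ L * dist a b} := by
          rw [Set.setOf_forall]
          refine isClosed_iInter fun a => ?_
          rw [Set.setOf_forall]
          refine isClosed_iInter fun b => ?_
          exact isClosed_le ((continuous_apply a).dist (continuous_apply b)) continuous_const
        have h2 : IsClosed {g : Set.Icc ε Λ → ℝ | ∀ a : Set.Icc ε Λ, |g a| ≤ C} := by
          rw [Set.setOf_forall]
          refine isClosed_iInter fun a => ?_
          exact isClosed_le ((continuous_apply a).abs) continuous_const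
        exact h1.inter h2
      · intro g hg
        rw [Set.mem_univ_pi]
        intro a
        exact abs_le.mp (hg.2 a)
    · -- Equicontinuous
      apply Metric.equicontinuous_of_continuity_modulus (fun t => L * t)
      · have : Filter.Tendsto (fun t : ℝ => L * t) (nhds 0) (nhds (L * 0)) :=
          (continuous_const.mul continuous_id).tendsto 0
        simpa using this
      · intro x y i
        exact i.2.1 x y
  exact hKc.of_isClosed_subset isClosed_closure (closure_minimal hSK hKc.isClosed)
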